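/- Let G and H be locally compact Hausdorff topological groups, each equipped with its Borel σ-algebra. Suppose there exist a group homomorphism φ : H → Sym(G) such that φ(h) is a Borel piecewise translation of G for every h ∈ H, and a Borel measurable map ψ : G → H such that ψ(φ(h)(x)) = h·ψ(x) for all h ∈ H and x ∈ G. If G is amenable, then H is amenable. -/

import Mathlib

/-- A topological group is amenable if there is a left-invariant mean on the space
`C_b(G)` of bounded continuous real-valued functions on `G`. -/
def IsLCAmenable (G : Type*) [Group G] [TopologicalSpace G] : Prop :=
  ∃ μ : BoundedContinuousFunction G ℝ →ₗ[ℝ] ℝ,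
    (∀ f : BoundedContinuousFunction G ℝ, (∀ x : G, 0 ≤ f x) → 0 ≤ μ f) ∧
    μ 1 = 1 ∧
    ∀ (g : G) (f f' : BoundedContinuousFunction G ℝ),
      (∀ x : G, f' x = f (g * x)) → μ f' = μ f

/-- A bijection `α : G → G` is a Borel piecewise translation if there is a finite
partition of `G` into Borel sets on each of which `α` agrees with a left translation. -/
def IsBorelPiecewiseTranslation {G : Type*} [Group G] [MeasurableSpace G]
    (α : Equiv.Perm G) : Prop :=
  ∃ 𝓟 : Finset (Set G),
    (∀ P ∈ 𝓟, MeasurableSet P) ∧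
    (∀ x : G, ∃! P : Set G, P ∈ 𝓟 ∧ x ∈ P) ∧
    (∀ P ∈ 𝓟, ∃ g : G, ∀ x ∈ P, α x = g * x)



open MeasureTheory Set Pointwise BoundedContinuousFunction

section Aux

variable {G : Type*} [Group G] [TopologicalSpace G] [IsTopologicalGroup G]
    [LocallyCompactSpace G] [T2Space G] [MeasurableSpace G] [BorelSpace G]

/-- Convolution of a bounded Borel function with a kernel. -/
noncomputable def conv (lam : Measure G) (φ₀ : G → ℝ) (F : G → ℝ) (x : G) : ℝ :=
  ∫ z, F z * φ₀ (x⁻¹ * z) ∂lam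

variable (lam : Measure G) [lam.IsHaarMeasure] (φ₀ : G → ℝ)

theorem ker_integrable (hc : Continuous φ₀) (hs : HasCompactSupport φ₀) (x : G) :
    Integrable (fun z => φ₀ (x⁻¹ * z)) lam := by
  have h : (fun z => φ₀ (x⁻¹ * z)) = φ₀ ∘ (Homeomorph.mulLeft x⁻¹) := rfl
  rw [h]
  exact (hc.comp (Homeomorph.mulLeft x⁻¹).continuous).integrable_of_hasCompactSupport
    (hs.comp_homeomorph _)

theorem term_integrable (hc : Continuous φ₀) (hs : HasCompactSupport φ₀)
    {F : G → ℝ} {C : ℝ} (hF : Measurable F) (hC : ∀ z, ‖F z‖ ≤ C) (x : G) :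
    Integrable (fun z => F z * φ₀ (x⁻¹ * z)) lam :=
  (ker_integrable lam φ₀ hc hs x).bdd_mul hF.aestronglyMeasurable (Filter.Eventually.of_forall hC)

theorem conv_continuous (hc : Continuous φ₀) (hs : HasCompactSupport φ₀)
    {F : G → ℝ} {C : ℝ} (hF : Measurable F) (hC : ∀ z, ‖F z‖ ≤ C) :
    Continuous (conv lam φ₀ F) := by
  rw [continuous_iff_continuousAt]
  intro x₀
  obtain ⟨K, hK, hKx⟩ := exists_compact_mem_nhds x₀
  have hScomp : IsCompact (K * tsupport φ₀) := hK.mul hs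
  have hcont : ContinuousOn
      (fun x : G => ∫ z, (ContinuousLinearMap.lsmul ℝ ℝ) (F z) (φ₀ (x⁻¹ * z)) ∂lam) K := by
    apply continuousOn_integral_bilinear_of_locally_integrable_of_compact_support
      (ContinuousLinearMap.lsmul ℝ ℝ) hScomp
    · exact (hc.comp ((continuous_fst.inv).mul continuous_snd)).continuousOn
    · intro p x hp hx
      by_contra hne
      have hmem : p⁻¹ * x ∈ tsupport φ₀ := subset_tsupport _ hne
      exact hx ⟨p, hp, p⁻¹ * x, hmem, mul_inv_cancel_left p x⟩
    · have hconst : IntegrableOn (fun _ : G => C) (K * tsupport φ₀) lam :=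
        integrableOn_const hScomp.measure_lt_top.ne
      exact Integrable.mono' hconst hF.aestronglyMeasurable.restrict
        (Filter.Eventually.of_forall hC)
  have hfe : conv lam φ₀ F
      = fun x : G => ∫ z, (ContinuousLinearMap.lsmul ℝ ℝ) (F z) (φ₀ (x⁻¹ * z)) ∂lam := by
    funext x
    simp only [conv, ContinuousLinearMap.lsmul_apply, smul_eq_mul]
  rw [hfe]
  exact hcont.continuousAt hKx

theorem conv_norm_le (hc : Continuous φ₀) (hs : HasCompactSupport φ₀)
    (hnn : ∀ z, 0 ≤ φ₀ z)
    {F : G → ℝ} {C : ℝ} (hF : Measurable F) (hC : ∀ z, ‖F z‖ ≤ C) (x : G) :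
    ‖conv lam φ₀ F x‖ ≤ C * ∫ z, φ₀ z ∂lam := by
  have hb : ∀ z, ‖F z * φ₀ (x⁻¹ * z)‖ ≤ C * φ₀ (x⁻¹ * z) := by
    intro z
    rw [norm_mul]
    have h2 : ‖φ₀ (x⁻¹ * z)‖ = φ₀ (x⁻¹ * z) := Real.norm_of_nonneg (hnn _)
    rw [h2]
    exact mul_le_mul_of_nonneg_right (hC z) (hnn _)
  have h := norm_integral_le_of_norm_le ((ker_integrable lam φ₀ hc hs x).const_mul C)
    (Filter.Eventually.of_forall hb)
  calc ‖conv lam φ₀ F x‖ ≤ ∫ z, C * φ₀ (x⁻¹ * z) ∂lam := h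
    _ = C * ∫ z, φ₀ (x⁻¹ * z) ∂lam := integral_const_mul _ _
    _ = C * ∫ z, φ₀ z ∂lam := by rw [integral_mul_left_eq_self φ₀ x⁻¹]

/-- The bounded continuous function obtained by convolving a bounded Borel function. -/
noncomputable def mkB (hc : Continuous φ₀) (hs : HasCompactSupport φ₀)
    (hnn : ∀ z, 0 ≤ φ₀ z) (h1 : ∀ z, ‖φ₀ z‖ ≤ 1)
    (F : G → ℝ) (hF : Measurable F) (C : ℝ) (hC : ∀ z, ‖F z‖ ≤ C) :
    BoundedContinuousFunction G ℝ :=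
  BoundedContinuousFunction.ofNormedAddCommGroup (conv lam φ₀ F)
    (conv_continuous lam φ₀ hc hs hF hC) (C * ∫ z, φ₀ z ∂lam)
    (conv_norm_le lam φ₀ hc hs hnn hF hC)

variable (hc : Continuous φ₀) (hs : HasCompactSupport φ₀)
    (hnn : ∀ z, 0 ≤ φ₀ z) (h1 : ∀ z, ‖φ₀ z‖ ≤ 1)

theorem mkB_apply (F : G → ℝ) (hF : Measurable F) (C : ℝ) (hC : ∀ z, ‖F z‖ ≤ C) (x : G) :
    mkB lam φ₀ hc hs hnn h1 F hF C hC x = conv lam φ₀ F x := rfl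

theorem mkB_congr {F F' : G → ℝ} {C C' : ℝ} (hF : Measurable F) (hC : ∀ z, ‖F z‖ ≤ C)
    (hF' : Measurable F') (hC' : ∀ z, ‖F' z‖ ≤ C') (hFF' : ∀ z, F z = F' z) :
    mkB lam φ₀ hc hs hnn h1 F hF C hC = mkB lam φ₀ hc hs hnn h1 F' hF' C' hC' := by
  have he : F = F' := funext hFF'
  subst he
  ext x
  rfl

theorem mkB_add {F F' : G → ℝ} {C C' CC : ℝ} (hF : Measurable F) (hC : ∀ z, ‖F z‖ ≤ C)
    (hF' : Measurable F') (hC' : ∀ z, ‖F' z‖ ≤ C')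
    (hFs : Measurable fun z => F z + F' z) (hCC : ∀ z, ‖F z + F' z‖ ≤ CC) :
    mkB lam φ₀ hc hs hnn h1 (fun z => F z + F' z) hFs CC hCC
      = mkB lam φ₀ hc hs hnn h1 F hF C hC + mkB lam φ₀ hc hs hnn h1 F' hF' C' hC' := by
  ext x
  simp only [BoundedContinuousFunction.coe_add, Pi.add_apply, mkB_apply]
  show conv lam φ₀ (fun z => F z + F' z) x = conv lam φ₀ F x + conv lam φ₀ F' x
  unfold conv
  rw [← integral_add (term_integrable lam φ₀ hc hs hF hC x)
    (term_integrable lam φ₀ hc hs hF' hC' x)]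
  congr 1
  funext z
  ring

theorem mkB_smul (r : ℝ) {F : G → ℝ} {C C' : ℝ} (hF : Measurable F) (hC : ∀ z, ‖F z‖ ≤ C)
    (hFs : Measurable fun z => r * F z) (hC' : ∀ z, ‖r * F z‖ ≤ C') :
    mkB lam φ₀ hc hs hnn h1 (fun z => r * F z) hFs C' hC'
      = r • mkB lam φ₀ hc hs hnn h1 F hF C hC := by
  ext x
  simp only [BoundedContinuousFunction.coe_smul, Pi.smul_apply, smul_eq_mul, mkB_apply]
  show conv lam φ₀ (fun z => r * F z) x = r * conv lam φ₀ F x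
  unfold conv
  rw [← integral_const_mul]
  congr 1
  funext z
  ring

theorem mkB_one (hm : Measurable fun _ : G => (1:ℝ)) (hb : ∀ z : G, ‖(1:ℝ)‖ ≤ (1:ℝ)) :
    mkB lam φ₀ hc hs hnn h1 (fun _ => (1:ℝ)) hm 1 hb
      = (∫ z, φ₀ z ∂lam) • (1 : BoundedContinuousFunction G ℝ) := by
  ext x
  simp only [BoundedContinuousFunction.coe_smul, Pi.smul_apply, smul_eq_mul,
    BoundedContinuousFunction.coe_one, Pi.one_apply, mul_one, mkB_apply]
  show conv lam φ₀ (fun _ => (1:ℝ)) x = ∫ z, φ₀ z ∂lam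
  unfold conv
  simp only [one_mul]
  exact integral_mul_left_eq_self φ₀ x⁻¹

theorem conv_translate {F : G → ℝ} (g x : G) :
    conv lam φ₀ (fun z => F (g * z)) x = conv lam φ₀ F (g * x) := by
  unfold conv
  rw [← integral_mul_left_eq_self (fun z => F z * φ₀ ((g * x)⁻¹ * z)) g]
  congr 1
  funext z
  congr 2
  simp [mul_inv_rev, mul_assoc]

theorem mkB_sum {ι : Type*} (s : Finset ι) (Fp : ι → G → ℝ)
    (hFp : ∀ i ∈ s, Measurable (Fp i)) (C : ℝ) (hCp : ∀ i ∈ s, ∀ z, ‖Fp i z‖ ≤ C)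
    (hFs : Measurable fun z => ∑ i ∈ s, Fp i z) (C' : ℝ)
    (hC' : ∀ z, ‖∑ i ∈ s, Fp i z‖ ≤ C') :
    mkB lam φ₀ hc hs hnn h1 (fun z => ∑ i ∈ s, Fp i z) hFs C' hC'
      = ∑ i ∈ s.attach, mkB lam φ₀ hc hs hnn h1 (Fp i.1) (hFp i.1 i.2) C (hCp i.1 i.2) := by
  ext x
  rw [BoundedContinuousFunction.coe_sum, Finset.sum_apply]
  show conv lam φ₀ (fun z => ∑ i ∈ s, Fp i z) x
      = ∑ i ∈ s.attach, conv lam φ₀ (Fp i.1) x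
  rw [Finset.sum_attach s (fun i => conv lam φ₀ (Fp i) x)]
  unfold conv
  simp_rw [Finset.sum_mul]
  exact integral_finset_sum s (fun i hi => term_integrable lam φ₀ hc hs (hFp i hi) (hCp i hi) x)

end Aux

/-- If `φ : H → Sym(G)` maps into Borel piecewise translations of `G`
and there is a Borel measurable equivariant map `ψ : G → H`, then amenability of `G`
implies amenability of `H`. -/
theorem stmt_10 {G H : Type*}
    [Group G] [TopologicalSpace G] [IsTopologicalGroup G] [LocallyCompactSpace G]
    [T2Space G] [MeasurableSpace G] [BorelSpace G]
    [Group H] [TopologicalSpace H] [IsTopologicalGroup H] [LocallyCompactSpace H]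
    [T2Space H] [MeasurableSpace H] [BorelSpace H]
    (φ : H →* Equiv.Perm G) (hφ : ∀ h : H, IsBorelPiecewiseTranslation (φ h))
    (ψ : G → H) (hψ : Measurable ψ)
    (heq : ∀ (h : H) (x : G), ψ (φ h x) = h * ψ x)
    (hG : IsLCAmenable G) :
    IsLCAmenable H := by
  classical
  obtain ⟨μ, hpos, hone, hinv⟩ := hG
  set lam : Measure G := Measure.haar with hlam
  obtain ⟨K₁, hK₁, hK₁mem⟩ := exists_compact_mem_nhds (1 : G)
  obtain ⟨φc, hφc1, -, hφcs, hφc01⟩ :=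
    exists_continuous_one_zero_of_isCompact hK₁ isClosed_empty (disjoint_empty K₁)
  set φ₀ : G → ℝ := ⇑φc with hφ₀def
  have hc : Continuous φ₀ := φc.continuous
  have hnn : ∀ z, 0 ≤ φ₀ z := fun z => (hφc01 z).1
  have h1 : ∀ z, ‖φ₀ z‖ ≤ 1 := fun z => by
    rw [Real.norm_of_nonneg (hnn z)]; exact (hφc01 z).2
  set c : ℝ := ∫ z, φ₀ z ∂lam with hcdef
  -- positivity of `c`
  have hint : Integrable φ₀ lam := hc.integrable_of_hasCompactSupport hφcs
  have hUopen : IsOpen (interior K₁) := isOpen_interior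
  have h1U : (1 : G) ∈ interior K₁ := mem_interior_iff_mem_nhds.2 hK₁mem
  have hUeq : ∫ z in interior K₁, φ₀ z ∂lam = (lam (interior K₁)).toReal := by
    rw [setIntegral_congr_fun hUopen.measurableSet
      (fun z hz => hφc1 (interior_subset hz))]
    simp [setIntegral_const, measureReal_def]
  have hUpos : 0 < (lam (interior K₁)).toReal := by
    refine ENNReal.toReal_pos (ne_of_gt (hUopen.measure_pos lam ⟨1, h1U⟩)) ?_
    exact ((measure_mono interior_subset).trans_lt hK₁.measure_lt_top).ne
  have hcpos : 0 < c := by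
    have h2 : ∫ z in interior K₁, φ₀ z ∂lam ≤ c :=
      setIntegral_le_integral hint (Filter.Eventually.of_forall hnn)
    calc (0:ℝ) < (lam (interior K₁)).toReal := hUpos
      _ = ∫ z in interior K₁, φ₀ z ∂lam := hUeq.symm
      _ ≤ c := h2
  have mF : ∀ f : BoundedContinuousFunction H ℝ, Measurable fun x : G => f (ψ x) :=
    fun f => (map_continuous f).measurable.comp hψ
  have bF : ∀ f : BoundedContinuousFunction H ℝ, ∀ x : G, ‖f (ψ x)‖ ≤ ‖f‖ :=
    fun f x => f.norm_coe_le_norm _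
  refine ⟨{ toFun := fun f => c⁻¹ * μ (mkB lam φ₀ hc hφcs hnn h1
      (fun x => f (ψ x)) (mF f) ‖f‖ (bF f)), map_add' := ?_, map_smul' := ?_ },
      ?_, ?_, ?_⟩
  · -- additivity
    intro f g
    have hbd : ∀ z : G, ‖f (ψ z) + g (ψ z)‖ ≤ ‖f‖ + ‖g‖ :=
      fun z => (norm_add_le _ _).trans (add_le_add (bF f z) (bF g z))
    beta_reduce
    have e1 : mkB lam φ₀ hc hφcs hnn h1 (fun x => (f + g) (ψ x)) (mF (f+g)) ‖f+g‖ (bF (f+g))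
        = mkB lam φ₀ hc hφcs hnn h1 (fun z => f (ψ z) + g (ψ z)) ((mF f).add (mF g))
          (‖f‖ + ‖g‖) hbd :=
      mkB_congr lam φ₀ hc hφcs hnn h1 _ _ _ _ (fun z => by simp)
    have e2 := mkB_add lam φ₀ hc hφcs hnn h1 (mF f) (bF f) (mF g) (bF g)
      ((mF f).add (mF g)) hbd
    rw [e1, e2, map_add]
    ring
  · -- scalar multiplication
    intro r f
    beta_reduce
    have hm2 : Measurable fun z : G => r * f (ψ z) := (mF f).const_mul r
    have hb2 : ∀ z : G, ‖r * f (ψ z)‖ ≤ |r| * ‖f‖ := fun z => by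
      rw [norm_mul, Real.norm_eq_abs]
      exact mul_le_mul_of_nonneg_left (bF f z) (abs_nonneg r)
    have e1 : mkB lam φ₀ hc hφcs hnn h1 (fun x => (r • f) (ψ x)) (mF (r • f)) ‖r • f‖
          (bF (r • f))
        = mkB lam φ₀ hc hφcs hnn h1 (fun z => r * f (ψ z)) hm2 (|r| * ‖f‖) hb2 :=
      mkB_congr lam φ₀ hc hφcs hnn h1 _ _ _ _ (fun z => by simp)
    have e2 := mkB_smul lam φ₀ hc hφcs hnn h1 r (mF f) (bF f) hm2 hb2
    simp only [RingHom.id_apply, smul_eq_mul]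
    rw [e1, e2, LinearMap.map_smul, smul_eq_mul]
    ring
  · -- positivity
    intro f hf
    simp only [LinearMap.coe_mk, AddHom.coe_mk]
    refine mul_nonneg (inv_nonneg.2 hcpos.le) (hpos _ ?_)
    intro x
    show (0:ℝ) ≤ conv lam φ₀ (fun x => f (ψ x)) x
    exact integral_nonneg fun z => mul_nonneg (hf (ψ z)) (hnn (x⁻¹ * z))
  · -- normalization
    simp only [LinearMap.coe_mk, AddHom.coe_mk]
    have hb1 : ∀ z : G, ‖(1:ℝ)‖ ≤ (1:ℝ) := fun _ => by simp
    have e1 : mkB lam φ₀ hc hφcs hnn h1 (fun x : G => (1 : BoundedContinuousFunction H ℝ) (ψ x))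
          (mF 1) ‖(1 : BoundedContinuousFunction H ℝ)‖ (bF 1)
        = mkB lam φ₀ hc hφcs hnn h1 (fun _ : G => (1:ℝ)) measurable_const 1 hb1 :=
      mkB_congr lam φ₀ hc hφcs hnn h1 _ _ _ _ (fun z => by simp)
    have e2 := mkB_one lam φ₀ hc hφcs hnn h1 measurable_const hb1
    rw [e1, e2, LinearMap.map_smul, hone, smul_eq_mul, mul_one]
    exact inv_mul_cancel₀ hcpos.ne'
  · -- invariance
    intro h f f' hff'
    simp only [LinearMap.coe_mk, AddHom.coe_mk]
    obtain ⟨𝓟, hPmeas, hPpart, hPtr⟩ := hφ h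
    have hgexists : ∀ P : Set G, ∃ gg : G, P ∈ 𝓟 → ∀ x ∈ P, (φ h) x = gg * x := by
      intro P
      by_cases hP : P ∈ 𝓟
      · obtain ⟨gg, hgg⟩ := hPtr P hP
        exact ⟨gg, fun _ => hgg⟩
      · exact ⟨1, fun hcc => absurd hcc hP⟩
    choose gP hgP using hgexists
    -- the two families of pieces
    have hFAm : ∀ P ∈ 𝓟, Measurable (P.indicator (fun w => f (ψ (gP P * w)))) :=
      fun P hP => ((mF f).comp (measurable_const_mul (gP P))).indicator (hPmeas P hP)
    have hFAb : ∀ P : Set G, ∀ z : G, ‖(P.indicator (fun w => f (ψ (gP P * w)))) z‖ ≤ ‖f‖ := by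
      intro P z
      by_cases hz : z ∈ P
      · rw [Set.indicator_of_mem hz]; exact f.norm_coe_le_norm _
      · rw [Set.indicator_of_notMem hz, norm_zero]; exact norm_nonneg f
    have hsetB : ∀ P ∈ 𝓟, MeasurableSet (gP P • P) := by
      intro P hP
      have he : gP P • P = (fun w => (gP P)⁻¹ * w) ⁻¹' P := by
        ext w
        constructor
        · intro hw
          obtain ⟨y, hy, hyw⟩ := Set.mem_smul_set.mp hw
          rw [← hyw]
          simpa [smul_eq_mul] using hy
        · intro hw
          exact Set.mem_smul_set.mpr ⟨(gP P)⁻¹ * w, hw, by simp [smul_eq_mul]⟩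
      rw [he]
      exact (hPmeas P hP).preimage (measurable_const_mul _)
    have hFBm : ∀ P ∈ 𝓟, Measurable ((gP P • P).indicator (fun w => f (ψ w))) :=
      fun P hP => (mF f).indicator (hsetB P hP)
    have hFBb : ∀ P : Set G, ∀ z : G, ‖((gP P • P).indicator (fun w => f (ψ w))) z‖ ≤ ‖f‖ := by
      intro P z
      by_cases hz : z ∈ gP P • P
      · rw [Set.indicator_of_mem hz]; exact f.norm_coe_le_norm _
      · rw [Set.indicator_of_notMem hz, norm_zero]; exact norm_nonneg f
    -- decomposition of `f' ∘ ψ`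
    have claim1 : ∀ x : G,
        f' (ψ x) = ∑ P ∈ 𝓟, P.indicator (fun w => f (ψ (gP P * w))) x := by
      intro x
      obtain ⟨P₀, ⟨hP₀, hxP₀⟩, huniq⟩ := hPpart x
      rw [Finset.sum_eq_single P₀]
      · rw [Set.indicator_of_mem hxP₀]
        calc f' (ψ x) = f (h * ψ x) := hff' (ψ x)
          _ = f (ψ ((φ h) x)) := by rw [heq]
          _ = f (ψ (gP P₀ * x)) := by rw [hgP P₀ hP₀ x hxP₀]
      · intro Q hQ hne
        exact Set.indicator_of_notMem (fun hxQ => hne (huniq Q ⟨hQ, hxQ⟩)) _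
      · intro habs; exact absurd hP₀ habs
    -- decomposition of `f ∘ ψ`
    have claim2 : ∀ z : G,
        f (ψ z) = ∑ P ∈ 𝓟, (gP P • P).indicator (fun w => f (ψ w)) z := by
      intro z
      obtain ⟨P₀, ⟨hP₀, hxP₀⟩, huniq⟩ := hPpart ((φ h).symm z)
      have hαx : (φ h) ((φ h).symm z) = z := Equiv.apply_symm_apply _ _
      have hzmem : z ∈ gP P₀ • P₀ := by
        refine Set.mem_smul_set.mpr ⟨(φ h).symm z, hxP₀, ?_⟩
        show gP P₀ * (φ h).symm z = z
        rw [← hgP P₀ hP₀ _ hxP₀, hαx]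
      rw [Finset.sum_eq_single P₀]
      · rw [Set.indicator_of_mem hzmem]
      · intro Q hQ hne
        refine Set.indicator_of_notMem (fun hzQ => ?_) _
        obtain ⟨w, hwQ, hwz⟩ := Set.mem_smul_set.mp hzQ
        have hw : (φ h) w = z := by
          rw [hgP Q hQ w hwQ]; exact hwz
        have hwx : w = (φ h).symm z := (φ h).injective (by rw [hw, hαx])
        exact hne (huniq Q ⟨hQ, hwx ▸ hwQ⟩)
      · intro habs; exact absurd hP₀ habs
    -- now compute
    have hsumFAm : Measurable fun z : G =>
        ∑ P ∈ 𝓟, P.indicator (fun w => f (ψ (gP P * w))) z :=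
      Finset.measurable_sum 𝓟 hFAm
    have hsumFAb : ∀ z : G,
        ‖∑ P ∈ 𝓟, P.indicator (fun w => f (ψ (gP P * w))) z‖ ≤ ‖f'‖ := fun z => by
      rw [← claim1 z]; exact bF f' z
    have hsumFBm : Measurable fun z : G =>
        ∑ P ∈ 𝓟, (gP P • P).indicator (fun w => f (ψ w)) z :=
      Finset.measurable_sum 𝓟 hFBm
    have hsumFBb : ∀ z : G,
        ‖∑ P ∈ 𝓟, (gP P • P).indicator (fun w => f (ψ w)) z‖ ≤ ‖f‖ := fun z => by
      rw [← claim2 z]; exact bF f z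
    have step1 : mkB lam φ₀ hc hφcs hnn h1 (fun x => f' (ψ x)) (mF f') ‖f'‖ (bF f')
        = mkB lam φ₀ hc hφcs hnn h1
            (fun z => ∑ P ∈ 𝓟, P.indicator (fun w => f (ψ (gP P * w))) z)
            hsumFAm ‖f'‖ hsumFAb :=
      mkB_congr lam φ₀ hc hφcs hnn h1 _ _ _ _ claim1
    have step2 := mkB_sum lam φ₀ hc hφcs hnn h1 𝓟
      (fun P => P.indicator (fun w => f (ψ (gP P * w)))) hFAm ‖f‖
      (fun P _ => hFAb P) hsumFAm ‖f'‖ hsumFAb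
    have step4 := mkB_sum lam φ₀ hc hφcs hnn h1 𝓟
      (fun P => (gP P • P).indicator (fun w => f (ψ w))) hFBm ‖f‖
      (fun P _ => hFBb P) hsumFBm ‖f‖ hsumFBb
    have step5 : mkB lam φ₀ hc hφcs hnn h1 (fun x => f (ψ x)) (mF f) ‖f‖ (bF f)
        = mkB lam φ₀ hc hφcs hnn h1
            (fun z => ∑ P ∈ 𝓟, (gP P • P).indicator (fun w => f (ψ w)) z)
            hsumFBm ‖f‖ hsumFBb :=
      mkB_congr lam φ₀ hc hφcs hnn h1 _ _ _ _ claim2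
    -- per-piece equality
    have piece : ∀ P : {x // x ∈ 𝓟},
        μ (mkB lam φ₀ hc hφcs hnn h1 (P.1.indicator (fun w => f (ψ (gP P.1 * w))))
          (hFAm P.1 P.2) ‖f‖ (hFAb P.1))
        = μ (mkB lam φ₀ hc hφcs hnn h1 ((gP P.1 • P.1).indicator (fun w => f (ψ w)))
          (hFBm P.1 P.2) ‖f‖ (hFBb P.1)) := by
      rintro ⟨P, hP⟩
      have hABz : ∀ z : G, (P.indicator (fun w => f (ψ (gP P * w)))) z
          = ((gP P • P).indicator (fun w => f (ψ w))) (gP P * z) := by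
        intro z
        by_cases hz : z ∈ P
        · rw [Set.indicator_of_mem hz, Set.indicator_of_mem
            (show (gP P * z) ∈ gP P • P from Set.mem_smul_set.mpr ⟨z, hz, rfl⟩)]
        · rw [Set.indicator_of_notMem hz, Set.indicator_of_notMem]
          intro hmem
          obtain ⟨y, hy, hyz⟩ := Set.mem_smul_set.mp hmem
          have hyzeq : y = z := mul_left_cancel (a := gP P)
            (show gP P * y = gP P * z from hyz)
          exact hz (hyzeq ▸ hy)
      have hm2 : Measurable fun z : G =>
          ((gP P • P).indicator (fun w => f (ψ w))) (gP P * z) :=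
        (hFBm P hP).comp (measurable_const_mul _)
      have hb2 : ∀ z : G, ‖((gP P • P).indicator (fun w => f (ψ w))) (gP P * z)‖ ≤ ‖f‖ :=
        fun z => hFBb P (gP P * z)
      rw [mkB_congr lam φ₀ hc hφcs hnn h1 (hFAm P hP) (hFAb P) hm2 hb2 hABz]
      exact hinv (gP P) _ _
        (fun x => conv_translate lam φ₀ (gP P) x)
    -- putting everything together
    congr 1
    rw [step1, step2, map_sum, step5, step4, map_sum]
    exact Finset.sum_congr rfl (fun P _ => piece P)
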